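/- Let a and b be integers greater than 1 such that a^m ≠ b^n for all positive integers m and n. Then for every positive integer ℓ there exist infinitely many positive integers n such that M_A(b^n) ≥ ℓ. -/

import Mathlib

/-- The `i`-th digit of `n` in base `a`. -/
def digit (a n i : ℕ) : ℕ := n / a ^ i % a

/-- `blockCount a n` is the number of maximal `a`-adic blocks of nonzero digits in the
base-`a` representation of `n`, counted via the top ends of the blocks. -/
noncomputable def blockCount (a n : ℕ) : ℕ :=
  {i : ℕ | digit a n i ≠ 0 ∧ digit a n (i + 1) = 0}.ncard

namespace Stmt11
open Set


lemma digit_shift (a n s j : ℕ) : digit a n (s + j) = digit a (n / a ^ s) j := by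
  unfold digit
  rw [Nat.div_div_eq_div_mul, ← pow_add]

lemma digit_eq_zero_of_lt {a n : ℕ} (i : ℕ) (h : n < a ^ i) : digit a n i = 0 := by
  unfold digit
  rw [Nat.div_eq_of_lt h, Nat.zero_mod]

def Y (a : ℕ) : ℕ → ℕ
  | 0 => 1
  | k + 1 => a ^ 2 * Y a k + 1

lemma Y_lb {a : ℕ} (ha : 1 < a) : ∀ k, a ^ (2 * k) ≤ Y a k
  | 0 => by simp [Y]
  | k + 1 => by
    have := Y_lb ha k
    have h2 : a ^ (2 * (k + 1)) = a ^ 2 * a ^ (2 * k) := by ring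
    rw [Y, h2]
    nlinarith [pow_pos (Nat.lt_of_lt_of_le Nat.zero_lt_one ha.le) 2]

lemma Y_lb_strict {a : ℕ} (ha : 1 < a) {k : ℕ} (hk : 0 < k) : a ^ (2 * k) < Y a k := by
  obtain ⟨k, rfl⟩ := Nat.exists_eq_add_of_lt hk
  rw [zero_add, Y]
  have := Y_lb ha k
  have h2 : a ^ (2 * (k + 1)) = a ^ 2 * a ^ (2 * k) := by ring
  rw [h2]
  have h3 : 0 < a ^ 2 := pow_pos (by omega) 2
  nlinarith

lemma Y_ub {a : ℕ} (ha : 1 < a) : ∀ k, Y a k < a ^ (2 * k + 1)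
  | 0 => by simpa [Y] using ha
  | k + 1 => by
    have := Y_ub ha k
    have h2 : a ^ (2 * (k + 1) + 1) = a ^ 2 * a ^ (2 * k + 1) := by ring
    rw [Y, h2]
    have h3 : 2 ≤ a ^ 2 := by nlinarith
    nlinarith

lemma Y_digit_even {a : ℕ} (ha : 1 < a) : ∀ k j, j ≤ k → digit a (Y a k) (2 * j) = 1
  | 0, 0, _ => by simp [Y, digit, Nat.mod_eq_of_lt ha]
  | k + 1, 0, _ => by
    unfold digit Y
    have hd : a ∣ a ^ 2 * Y a k := Dvd.dvd.mul_right (dvd_pow_self a two_ne_zero) _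
    simp [Nat.add_mod, Nat.eq_zero_of_dvd_of_lt, Nat.mod_eq_zero_of_dvd hd,
      Nat.mod_eq_of_lt ha]
  | k + 1, j + 1, hj => by
    have h2 : 2 * (j + 1) = 2 + 2 * j := by ring
    rw [h2, digit_shift]
    have hY : Y a (k + 1) / a ^ 2 = Y a k := by
      rw [Y, Nat.mul_add_div (pow_pos (by omega) 2)]
      simp [Nat.div_eq_of_lt (show 1 < a ^ 2 by nlinarith)]
    rw [hY]
    exact Y_digit_even ha k j (by omega)

lemma Y_digit_odd {a : ℕ} (ha : 1 < a) : ∀ k j, j ≤ k → digit a (Y a k) (2 * j + 1) = 0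
  | 0, 0, _ => by
    unfold digit Y
    simp [Nat.div_eq_of_lt (show 1 < a by omega)]
  | k + 1, 0, _ => by
    unfold digit Y
    have h1 : (a ^ 2 * Y a k + 1) / a ^ 1 = a * Y a k := by
      have : a ^ 2 * Y a k = a ^ 1 * (a * Y a k) := by ring
      rw [this, Nat.mul_add_div (by simpa using Nat.lt_of_lt_of_le Nat.zero_lt_one ha.le)]
      simp [Nat.div_eq_of_lt (show 1 < a by omega)]
    rw [h1]
    simp [Nat.mul_mod_right]
  | k + 1, j + 1, hj => by
    have h2 : 2 * (j + 1) + 1 = 2 + (2 * j + 1) := by ring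
    rw [h2, digit_shift]
    have hY : Y a (k + 1) / a ^ 2 = Y a k := by
      rw [Y, Nat.mul_add_div (pow_pos (by omega) 2)]
      simp [Nat.div_eq_of_lt (show 1 < a ^ 2 by nlinarith)]
    rw [hY]
    exact Y_digit_odd ha k j (by omega)



/-- Stepping lemma: a small positive δ has a positive multiple in any subinterval of (0,1]
of length > δ. -/
lemma step_lemma {c d δ : ℝ} (hc : 0 ≤ c) (hcd : c < d) (hδ0 : 0 < δ) (hδ : δ < d - c) :
    ∃ t : ℕ, 0 < t ∧ c < (t : ℝ) * δ ∧ (t : ℝ) * δ < d := by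
  refine ⟨⌊c / δ⌋₊ + 1, Nat.succ_pos _, ?_, ?_⟩
  · have h1 : c / δ < (⌊c / δ⌋₊ + 1 : ℝ) := Nat.lt_floor_add_one _
    calc c = c / δ * δ := by field_simp
    _ < (⌊c / δ⌋₊ + 1 : ℝ) * δ := by exact mul_lt_mul_of_pos_right h1 hδ0
    _ = _ := by push_cast; ring
  · have h1 : (⌊c / δ⌋₊ : ℝ) ≤ c / δ := Nat.floor_le (by positivity)
    have h2 : (⌊c / δ⌋₊ : ℝ) * δ ≤ c := by
      calc (⌊c / δ⌋₊ : ℝ) * δ ≤ c / δ * δ := mul_le_mul_of_nonneg_right h1 hδ0.le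
      _ = c := by field_simp
    push_cast
    nlinarith

lemma exists_fract {θ : ℝ} (hirr : ∀ p q : ℤ, 0 < q → (q : ℝ) * θ ≠ p)
    {c d : ℝ} (hc : 0 ≤ c) (hcd : c < d) (hd : d ≤ 1) :
    ∃ n : ℕ, 0 < n ∧ Int.fract ((n : ℝ) * θ) ∈ Set.Ioo c d := by
  set S : AddSubgroup ℝ := AddSubgroup.closure {1, θ} with hS
  have hdense : Dense (S : Set ℝ) := by
    rcases AddSubgroup.dense_or_cyclic S with h | ⟨g, hg⟩
    · exact h
    · exfalso
      have h1 : (1 : ℝ) ∈ S := AddSubgroup.subset_closure (by simp)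
      have hθ : θ ∈ S := AddSubgroup.subset_closure (by simp)
      rw [hg, AddSubgroup.mem_closure_singleton] at h1 hθ
      obtain ⟨m, hm⟩ := h1
      obtain ⟨p, hp⟩ := hθ
      have hm0 : m ≠ 0 := by
        rintro rfl
        rw [zero_zsmul] at hm
        exact one_ne_zero hm.symm
      have key : (m : ℝ) * θ = p := by
        have : (m : ℝ) * θ = (p : ℝ) * (m • g) := by
          rw [← hp]; push_cast [zsmul_eq_mul]; ring
        rw [hm] at this; simpa using this
      rcases lt_or_gt_of_ne hm0 with hneg | hpos
      · exact hirr (-p) (-m) (by omega) (by push_cast; linarith [key])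
      · exact hirr p m hpos key
  obtain ⟨x, hxS, hx⟩ := hdense.exists_mem_open isOpen_Ioo
    (⟨(d - c) / 2, by constructor <;> linarith⟩ : Set.Nonempty (Ioo (0 : ℝ) (d - c)))
  obtain ⟨m, k, hmk⟩ := AddSubgroup.mem_closure_pair.mp hxS
  simp only [zsmul_eq_mul, mul_one] at hmk
  -- x = m + k * θ, 0 < x < d - c ≤ 1
  obtain ⟨hx0, hx1⟩ := hx
  have hk0 : k ≠ 0 := by
    rintro rfl
    simp only [Int.cast_zero, zero_mul, add_zero] at hmk
    subst hmk
    have : (0 : ℤ) < m := by exact_mod_cast hx0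
    have : (m : ℝ) < 1 := by linarith
    have : m < 1 := by exact_mod_cast this
    omega
  rcases lt_or_gt_of_ne hk0 with hkneg | hkpos
  · -- k < 0 : use interval (1 - d, 1 - c)
    obtain ⟨t, ht0, ht1, ht2⟩ := step_lemma (c := 1 - d) (d := 1 - c) (by linarith)
      (by linarith) hx0 (by linarith)
    have hkn : ((-k).toNat : ℝ) = -(k : ℝ) := by
      exact_mod_cast Int.toNat_of_nonneg (by omega : (0:ℤ) ≤ -k)
    refine ⟨t * (-k).toNat, Nat.mul_pos ht0 (by omega), ?_⟩
    have hrw : ((t * (-k).toNat : ℕ) : ℝ) * θ = -((t : ℝ) * x) + ((t * m : ℤ) : ℝ) := by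
      push_cast [hkn]
      have : (k : ℝ) * θ = x - m := by linarith [hmk]
      nlinarith [this]
    have hfr : Int.fract ((t : ℝ) * x) = (t : ℝ) * x :=
      Int.fract_eq_self.2 ⟨by nlinarith, by linarith⟩
    have hne : Int.fract ((t : ℝ) * x) ≠ 0 := by
      rw [hfr]; positivity
    rw [hrw, Int.fract_add_intCast, Int.fract_neg hne, hfr]
    constructor <;> [linarith; linarith]
  · -- k > 0 : use interval (c, d)
    obtain ⟨t, ht0, ht1, ht2⟩ := step_lemma hc hcd hx0 hx1
    have hkn : (k.toNat : ℝ) = (k : ℝ) := by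
      exact_mod_cast Int.toNat_of_nonneg hkpos.le
    refine ⟨t * k.toNat, Nat.mul_pos ht0 (by omega), ?_⟩
    have hrw : ((t * k.toNat : ℕ) : ℝ) * θ = (t : ℝ) * x - ((t * m : ℤ) : ℝ) := by
      push_cast [hkn]
      have : (k : ℝ) * θ = x - m := by linarith [hmk]
      nlinarith [this]
    rw [hrw, Int.fract_sub_intCast, Int.fract_eq_self.2 ⟨by nlinarith, by linarith⟩]
    exact ⟨ht1, ht2⟩

lemma fract_infinite {θ : ℝ} (hirr : ∀ p q : ℤ, 0 < q → (q : ℝ) * θ ≠ p)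
    {c d : ℝ} (hc : 0 ≤ c) (hcd : c < d) (hd : d ≤ 1) :
    {n : ℕ | 0 < n ∧ Int.fract ((n : ℝ) * θ) ∈ Set.Ioo c d}.Infinite := by
  by_contra hfin
  rw [Set.not_infinite] at hfin
  set F := hfin.toFinset with hF
  set V : Finset ℝ := insert c (F.image fun n : ℕ => Int.fract ((n : ℝ) * θ)) with hV
  have hVne : V.Nonempty := ⟨c, Finset.mem_insert_self _ _⟩
  set c' := V.max' hVne with hc'
  have hcc' : c ≤ c' := Finset.le_max' V c (Finset.mem_insert_self _ _)
  have hc'd : c' < d := by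
    apply (Finset.max'_lt_iff V hVne).2
    intro y hy
    rcases Finset.mem_insert.mp hy with rfl | hy
    · exact hcd
    · obtain ⟨n, hn, rfl⟩ := Finset.mem_image.mp hy
      exact ((hfin.mem_toFinset.mp hn).2).2
  obtain ⟨n, hn0, hn1, hn2⟩ := exists_fract hirr (hc.trans hcc') hc'd hd
  have hnF : n ∈ F := hfin.mem_toFinset.mpr ⟨hn0, lt_of_le_of_lt hcc' hn1, hn2⟩
  have : Int.fract ((n : ℝ) * θ) ≤ c' :=
    Finset.le_max' V _ (Finset.mem_insert_of_mem (Finset.mem_image_of_mem _ hnF))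
  linarith

end Stmt11

open Stmt11 in
theorem stmt_11 (a b : ℕ) (ha : 1 < a) (hb : 1 < b)
    (h : ∀ m n : ℕ, 0 < m → 0 < n → a ^ m ≠ b ^ n) (ℓ : ℕ) (hℓ : 0 < ℓ) :
    {n : ℕ | 0 < n ∧ ℓ ≤ blockCount a (b ^ n)}.Infinite := by
  have haR : (1 : ℝ) < a := by exact_mod_cast ha
  have hbR : (1 : ℝ) < b := by exact_mod_cast hb
  have ha0 : (0 : ℝ) < a := by linarith
  set θ := Real.logb a b with hθdef
  have hθpos : 0 < θ := Real.logb_pos haR hbR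
  have hab : (a : ℝ) ^ θ = b := Real.rpow_logb ha0 (ne_of_gt haR) (by linarith)
  -- irrationality
  have hirr : ∀ p q : ℤ, 0 < q → (q : ℝ) * θ ≠ p := by
    intro p q hq heq
    have hp : 0 < p := by
      have : (0 : ℝ) < p := by rw [← heq]; positivity
      exact_mod_cast this
    apply h p.toNat q.toNat (by omega) (by omega)
    have h1 : ((q.toNat : ℕ) : ℝ) = (q : ℝ) := by exact_mod_cast Int.toNat_of_nonneg hq.le
    have h2 : ((p.toNat : ℕ) : ℝ) = (p : ℝ) := by exact_mod_cast Int.toNat_of_nonneg hp.le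
    have hreal : ((a : ℝ)) ^ (p.toNat : ℕ) = ((b : ℝ)) ^ (q.toNat : ℕ) := by
      rw [← hab, ← Real.rpow_natCast ((a : ℝ) ^ θ) q.toNat, ← Real.rpow_natCast (a : ℝ) p.toNat,
        ← Real.rpow_mul ha0.le]
      congr 1
      rw [h1, h2, ← heq]; ring
    exact_mod_cast hreal
  -- the pattern number and its logs
  have hYpos : 0 < Y a ℓ := lt_of_lt_of_le (pow_pos (by omega) _) (Y_lb ha ℓ)
  have hYR : (0 : ℝ) < Y a ℓ := by exact_mod_cast hYpos
  set L0 := Real.logb a (Y a ℓ) with hL0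
  set L1 := Real.logb a ((Y a ℓ : ℝ) + 1) with hL1
  have hpowlog : ∀ m : ℕ, Real.logb a ((a : ℝ) ^ m) = m := by
    intro m
    rw [Real.logb_pow, Real.logb_self_eq_one haR, mul_one]
  have hlbs : (a : ℝ) ^ (2 * ℓ) < Y a ℓ := by exact_mod_cast Y_lb_strict ha hℓ
  have hubs : ((Y a ℓ : ℝ)) + 1 ≤ (a : ℝ) ^ (2 * ℓ + 1) := by
    have := Y_ub ha ℓ
    have : Y a ℓ + 1 ≤ a ^ (2 * ℓ + 1) := this
    exact_mod_cast this
  set c := L0 - (2 * ℓ : ℕ) with hc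
  set d := L1 - (2 * ℓ : ℕ) with hd
  have hc0 : 0 < c := by
    have h1 : ((2 * ℓ : ℕ) : ℝ) < L0 := by
      rw [← hpowlog (2 * ℓ)]
      exact Real.logb_lt_logb haR (by positivity) hlbs
    simpa [hc] using h1
  have hcd : c < d := by
    have : L0 < L1 := Real.logb_lt_logb haR hYR (by linarith)
    simpa [hc, hd]
  have hd1 : d ≤ 1 := by
    have h1 : L1 ≤ ((2 * ℓ + 1 : ℕ) : ℝ) := by
      rw [← hpowlog (2 * ℓ + 1)]
      exact (Real.logb_le_logb haR (by linarith) (by positivity)).2 (by exact_mod_cast hubs)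
    have : ((2 * ℓ + 1 : ℕ) : ℝ) = ((2 * ℓ : ℕ) : ℝ) + 1 := by push_cast; ring
    rw [this] at h1
    simp only [hd]
    linarith
  -- the infinite set of good n
  obtain ⟨N, hN⟩ := exists_nat_ge ((2 * ℓ + 1 : ℝ) / θ)
  have hinf := (fract_infinite hirr hc0.le hcd hd1).diff (Set.finite_Iio N)
  refine hinf.mono ?_
  rintro n ⟨⟨hn0, hfr1, hfr2⟩, hnN⟩
  simp only [Set.mem_Iio, not_lt] at hnN
  refine ⟨hn0, ?_⟩
  -- n*θ is large
  have hnθ : ((2 * ℓ : ℕ) : ℝ) + 1 ≤ (n : ℝ) * θ := by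
    have h1 : (2 * ℓ + 1 : ℝ) ≤ (N : ℝ) * θ := by
      rw [div_le_iff₀ hθpos] at hN; linarith
    have h2 : (N : ℝ) * θ ≤ (n : ℝ) * θ := by
      have : (N : ℝ) ≤ n := by exact_mod_cast hnN
      nlinarith
    push_cast
    linarith
  set P := ⌊(n : ℝ) * θ⌋ with hP
  have hPge : (2 * ℓ : ℤ) ≤ P := Int.le_floor.2 (by push_cast at hnθ ⊢; linarith)
  set s := (P - 2 * ℓ).toNat with hs
  have hsZ : (s : ℤ) = P - 2 * ℓ := Int.toNat_of_nonneg (by omega)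
  have hsR : (s : ℝ) = (P : ℝ) - (2 * ℓ : ℕ) := by exact_mod_cast congrArg (Int.cast : ℤ → ℝ) hsZ
  have hfrP : Int.fract ((n : ℝ) * θ) = (n : ℝ) * θ - P := rfl
  rw [hfrP] at hfr1 hfr2
  -- real bounds on b^n
  have hbn : ((b : ℝ)) ^ n = (a : ℝ) ^ ((n : ℝ) * θ) := by
    rw [mul_comm, Real.rpow_mul ha0.le, hab, Real.rpow_natCast]
  have hYs : ((Y a ℓ : ℝ)) * (a : ℝ) ^ s = (a : ℝ) ^ ((s : ℝ) + L0) := by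
    rw [Real.rpow_add ha0, Real.rpow_natCast, hL0, Real.rpow_logb ha0 (ne_of_gt haR) hYR,
      mul_comm]
  have hY1s : (((Y a ℓ : ℝ)) + 1) * (a : ℝ) ^ s = (a : ℝ) ^ ((s : ℝ) + L1) := by
    rw [Real.rpow_add ha0, Real.rpow_natCast, hL1,
      Real.rpow_logb ha0 (ne_of_gt haR) (by linarith), mul_comm]
  have key1 : ((Y a ℓ : ℝ)) * (a : ℝ) ^ s < (b : ℝ) ^ n := by
    rw [hbn, hYs]
    refine (Real.rpow_lt_rpow_left_iff haR).2 ?_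
    rw [hsR]
    have : c = L0 - (2 * ℓ : ℕ) := hc
    linarith
  have key2 : ((b : ℝ)) ^ n < (((Y a ℓ : ℝ)) + 1) * (a : ℝ) ^ s := by
    rw [hbn, hY1s]
    refine (Real.rpow_lt_rpow_left_iff haR).2 ?_
    rw [hsR]
    linarith
  -- nat bounds and the division
  have hlt1 : Y a ℓ * a ^ s < b ^ n := by exact_mod_cast key1
  have hlt2 : b ^ n < (Y a ℓ + 1) * a ^ s := by exact_mod_cast key2
  have hdiv : b ^ n / a ^ s = Y a ℓ := Nat.div_eq_of_lt_le hlt1.le hlt2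
  have hdig : ∀ t, digit a (b ^ n) (s + t) = digit a (Y a ℓ) t := by
    intro t; rw [digit_shift, hdiv]
  -- counting blocks
  have hfinS : {i : ℕ | digit a (b ^ n) i ≠ 0 ∧ digit a (b ^ n) (i + 1) = 0}.Finite := by
    apply Set.Finite.subset (Set.finite_Iic (b ^ n))
    rintro i ⟨hi, -⟩
    have h1 : b ^ n / a ^ i ≠ 0 := by
      intro h0; apply hi; unfold digit; rw [h0]; simp
    have h2 : a ^ i ≤ b ^ n := by
      by_contra hcon
      exact h1 (Nat.div_eq_of_lt (by omega))
    exact le_trans (Nat.lt_pow_self ha : i < a ^ i).le h2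
  classical
  set T := (Finset.range ℓ).image (fun j => s + 2 * j) with hT
  have hTcard : T.card = ℓ := by
    rw [hT, Finset.card_image_of_injective _ (fun x y hxy => by omega), Finset.card_range]
  have hTsub : (T : Set ℕ) ⊆ {i : ℕ | digit a (b ^ n) i ≠ 0 ∧ digit a (b ^ n) (i + 1) = 0} := by
    intro i hi
    simp only [hT, Finset.coe_image, Finset.coe_range, Set.mem_image, Set.mem_Iio] at hi
    obtain ⟨j, hj, rfl⟩ := hi
    constructor
    · rw [hdig (2 * j), Y_digit_even ha ℓ j (by omega)]; omega
    · have : s + 2 * j + 1 = s + (2 * j + 1) := by ring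
      rw [this, hdig (2 * j + 1), Y_digit_odd ha ℓ j (by omega)]
  calc ℓ = (T : Set ℕ).ncard := by rw [Set.ncard_coe_finset, hTcard]
  _ ≤ _ := Set.ncard_le_ncard hTsub hfinS
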